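/- Zero-tail property of the staircase structure (Proposition 2): fix i ∈ [G - R_r + K_c : G]. If M = SCGen(W, (Z_{i'})_{i'∈[G]}) where for i' ≤ i, Z_{i'} has its bottom G - i rows zero, and for i' > i, Z_{i'} = 0 entirely, then all columns of M with index in [λ_i + 1 : λ_G] are zero. -/
import Mathlib


def scG (N Rr : ℕ) : ℕ := N - Rr + 1
def scAlpha (N Rr Kc i : ℕ) : ℕ := N - Rr + Kc + 1 - i
def scBeta (N i : ℕ) : ℕ := N + 1 - i
def scL (N Rr Kc : ℕ) : ℕ := (Finset.Icc 1 (scG N Rr)).lcm (scAlpha N Rr Kc)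
def scGamma (N Rr Kc i : ℕ) : ℕ :=
  if i ≤ 1 then scL N Rr Kc / scAlpha N Rr Kc 1
  else scL N Rr Kc / (scAlpha N Rr Kc (i - 1) * scAlpha N Rr Kc i)
def scLambda (N Rr Kc i : ℕ) : ℕ :=
  if i = 0 then 0 else scL N Rr Kc / scAlpha N Rr Kc i

set_option maxHeartbeats 1000000 in
mutual
  def scM {F : Type} [Field F] (N Rr Kc : ℕ) (W : ℕ → F) (Z : ℕ → ℕ → ℕ → F)
      (i r c : ℕ) : F :=
    if _hi0 : i = 0 then 0
    else if _hi1 : i = 1 then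
      if r < scAlpha N Rr Kc 1 then W (r * scGamma N Rr Kc 1 + c)
      else if r < scBeta N 1 then Z 1 (r - scAlpha N Rr Kc 1) c else 0
    else
      if r < scAlpha N Rr Kc i then
        scCat N Rr Kc W Z i (i - 1) (r * scGamma N Rr Kc i + c)
      else if r < scBeta N i then Z i (r - scAlpha N Rr Kc i) c else 0
  termination_by 2 * i
  decreasing_by omega

  def scCat {F : Type} [Field F] (N Rr Kc : ℕ) (W : ℕ → F) (Z : ℕ → ℕ → ℕ → F)
      (i j k : ℕ) : F :=
    if _hj : j = 0 then 0
    else if k < scLambda N Rr Kc (j - 1) then scCat N Rr Kc W Z i (j - 1) k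
    else scM N Rr Kc W Z j (Rr + i - j - 1) (k - scLambda N Rr Kc (j - 1))
  termination_by 2 * j + 1
  decreasing_by all_goals omega
end

lemma scCat_zero {F : Type} [Field F]
    (N Rr Kc : ℕ) (hK : 0 < Kc) (hKR : Kc ≤ Rr) (hRN : Rr ≤ N)
    (i : ℕ) (hi1 : 1 ≤ i) (hiG : i ≤ scG N Rr) (hilow : scG N Rr ≤ i + (Rr - Kc))
    (W : ℕ → F) (Z : ℕ → ℕ → ℕ → F)
    (hZ1 : ∀ i' ∈ Finset.Icc 1 i, ∀ r, (Rr - Kc) - (scG N Rr - i) ≤ r →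
      ∀ c, Z i' r c = 0)
    (hZ2 : ∀ i', i < i' → ∀ r c, Z i' r c = 0)
    (j : ℕ) (hij : i < j) (hjG : j ≤ scG N Rr) :
    ∀ j', j' < j → ∀ k, scCat N Rr Kc W Z j j' k = 0 := by
  intro j'
  induction j' using Nat.strong_induction_on with
  | _ j' IH =>
    intro hj' k
    rw [scCat]
    split_ifs with h0 hk
    · rfl
    · exact IH (j' - 1) (by omega) (by omega) k
    · have hG : scG N Rr = N - Rr + 1 := rfl
      have hαd : scAlpha N Rr Kc j' = N - Rr + Kc + 1 - j' := rfl
      have hα1 : scAlpha N Rr Kc 1 = N - Rr + Kc + 1 - 1 := rfl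
      have hβ : scBeta N j' = N + 1 - j' := rfl
      have hβ1 : scBeta N 1 = N + 1 - 1 := rfl
      rw [scM]
      have h1 : ¬ (Rr + j - j' - 1 < scAlpha N Rr Kc j') := by
        rw [hαd]; omega
      rcases Nat.lt_or_ge j' 2 with hj2 | hj2
      · have hj1 : j' = 1 := by omega
        subst hj1
        rw [dif_neg h0, dif_pos rfl, if_neg (by rw [hα1]; omega),
          if_pos (by rw [hβ1]; omega)]
        rcases Nat.lt_or_ge i 1 with hlt | hge
        · exact hZ2 1 hlt _ _
        · exact hZ1 1 (Finset.mem_Icc.mpr ⟨le_refl 1, hge⟩) _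
            (by rw [hα1, hG]; omega) _
      · rw [dif_neg h0, dif_neg (by omega), if_neg h1,
          if_pos (by rw [hβ]; omega)]
        rcases Nat.lt_or_ge i j' with hlt | hge
        · exact hZ2 j' hlt _ _
        · exact hZ1 j' (Finset.mem_Icc.mpr ⟨by omega, hge⟩) _
            (by rw [hαd, hG]; omega) _

/-- Zero-tail property of the staircase structure (Proposition 2): fix
`i ∈ [G - R_r + K_c : G]`. If `M = SCGen(W, (Z_{i'})_{i'∈[G]})` where for
`i' ≤ i` the noise block `Z_{i'}` has its bottom `G - i` rows zero and for
`i' > i` the block `Z_{i'}` is entirely zero, then all (global) columns of `M`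
with index in `[λ_i + 1 : λ_G]` — i.e. all entries of the blocks
`M_{i+1}, …, M_G` — are zero. -/
theorem scM_zero_tail {F : Type} [Field F]
    (N Rr Kc : ℕ) (hK : 0 < Kc) (hKR : Kc ≤ Rr) (hRN : Rr ≤ N)
    (i : ℕ) (hi : i ∈ Finset.Icc 1 (scG N Rr)) (hilow : scG N Rr ≤ i + (Rr - Kc))
    (W : ℕ → F) (Z : ℕ → ℕ → ℕ → F)
    (hZ1 : ∀ i' ∈ Finset.Icc 1 i, ∀ r, (Rr - Kc) - (scG N Rr - i) ≤ r →
      ∀ c, Z i' r c = 0)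
    (hZ2 : ∀ i', i < i' → ∀ r c, Z i' r c = 0) :
    ∀ j, i < j → j ≤ scG N Rr → ∀ r, r < N → ∀ c, c < scGamma N Rr Kc j →
      scM N Rr Kc W Z j r c = 0 := by
  simp only [Finset.mem_Icc] at hi
  intro j hij hjG r hr c hc
  rw [scM]
  rw [dif_neg (by omega), dif_neg (by omega)]
  split_ifs with h1 h2
  · exact scCat_zero N Rr Kc hK hKR hRN i hi.1 hi.2 hilow W Z hZ1 hZ2 j hij hjG
      (j - 1) (by omega) _
  · exact hZ2 j hij _ _
  · rfl
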